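/- If S ≤_weak T in SYT_n, then T^t ≤_weak S^t, where T^t denotes the transpose (conjugate) tableau; that is, transposition is an order-reversing involution of the weak order on SYT_n. -/

import Mathlib

/-! Basic combinatorial setup: permutations in one-line notation as lists of
natural numbers, RSK insertion, standard Young tableaux as lists of rows,
the right weak Bruhat order and the weak order on standard Young tableaux. -/

/-- `w` is a permutation of `{1,…,n}` written in one-line notation. -/
def IsPermWord (n : ℕ) (w : List ℕ) : Prop := w.Perm (List.range' 1 n)

/-- The left inversion set of a word `w` in one-line notation:
pairs `(a,b)` with `a < b` such that `a` occurs to the right of `b` in `w`. -/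
def InvL (w : List ℕ) : Set (ℕ × ℕ) :=
  {p | p.1 < p.2 ∧ p.1 ∈ w ∧ p.2 ∈ w ∧ w.idxOf p.2 < w.idxOf p.1}

/-- The right weak Bruhat order, characterized by inclusion of left inversion sets. -/
def wordLE (u w : List ℕ) : Prop := InvL u ⊆ InvL w

/-- Schensted row insertion of a letter `x` into a row:
returns the new row together with the bumped letter, if any. -/
def insertRow : List ℕ → ℕ → List ℕ × Option ℕ
  | [], x => ([x], none)
  | y :: ys, x =>
    if x < y then (x :: ys, some y)
    else
      let p := insertRow ys x
      (y :: p.1, p.2)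

/-- Schensted insertion of a letter into a tableau (given as its list of rows). -/
def insertTab : List (List ℕ) → ℕ → List (List ℕ)
  | [], x => [[x]]
  | r :: rs, x =>
    let p := insertRow r x
    match p.2 with
    | none => p.1 :: rs
    | some y => p.1 :: insertTab rs y

/-- The RSK insertion tableau `I(w)` of a word `w`. -/
def RSK (w : List ℕ) : List (List ℕ) := w.foldl insertTab []

/-- The shape of a tableau: the list of row lengths. -/
def shape (t : List (List ℕ)) : List ℕ := t.map List.length

/-- `t` is a standard Young tableau with `n` cells: rows strictly increase,
columns strictly increase (in particular row lengths weakly decrease),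
there are no empty rows, and the entries are exactly `1,…,n`. -/
def IsSYT (n : ℕ) (t : List (List ℕ)) : Prop :=
  (∀ r ∈ t, r.Pairwise (· < ·)) ∧
  t.Chain' (fun r₁ r₂ => r₂.length ≤ r₁.length ∧ ∀ c < r₂.length, r₁.getD c 0 < r₂.getD c 0) ∧
  (∀ r ∈ t, r ≠ []) ∧
  t.flatten.Perm (List.range' 1 n)

/-- The (row) reading word of a tableau: rows read left to right,
starting from the bottom row. -/
def readWord (t : List (List ℕ)) : List ℕ := t.reverse.flatten

/-- `st(w_[i,j])`: the subword of `w` consisting of the letters in `[i,j]`,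
standardized by subtracting `i-1` from each letter. -/
def restr (w : List ℕ) (i j : ℕ) : List ℕ :=
  (w.filter (fun x => decide (i ≤ x ∧ x ≤ j))).map (fun x => x - (i - 1))

/-- `st(T_[i,j])`: the (standardized) jeu-de-taquin rectification of the
restriction of `T` to the entries in `[i,j]`; the rectification of a skew
tableau is computed as the insertion tableau of its reading word. -/
def restrTab (t : List (List ℕ)) (i j : ℕ) : List (List ℕ) :=
  RSK (restr (readWord t) i j)

/-- The relation generating the weak order on `SYT_n`:
`S ≤ T` if some `σ` in the Knuth class of `S` and some `τ` in the Knuth class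
of `T` satisfy `σ ≤ τ` in the right weak Bruhat order. -/
def tabRel (n : ℕ) (S T : List (List ℕ)) : Prop :=
  ∃ σ τ : List ℕ, IsPermWord n σ ∧ IsPermWord n τ ∧ RSK σ = S ∧ RSK τ = T ∧ wordLE σ τ

/-- Melnikov's weak order on `SYT_n`: the transitive closure of `tabRel`. -/
def tabLE (n : ℕ) (S T : List (List ℕ)) : Prop := Relation.TransGen (tabRel n) S T

/-- Strict weak order on `SYT_n`. -/
def tabLT (n : ℕ) (S T : List (List ℕ)) : Prop := tabLE n S T ∧ S ≠ T

/-- `S ⋖ T` in the weak order on `SYT_n`. -/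
def tabCov (n : ℕ) (S T : List (List ℕ)) : Prop :=
  tabLT n S T ∧ ∀ Q, IsSYT n Q → ¬ (tabLT n S Q ∧ tabLT n Q T)

/-- `S ⋖ T` in the weak order within the subset of `SYT_n` cut out by `P`. -/
def tabCovIn (n : ℕ) (P : List (List ℕ) → Prop) (S T : List (List ℕ)) : Prop :=
  tabLT n S T ∧ ∀ Q, IsSYT n Q → P Q → ¬ (tabLT n S Q ∧ tabLT n Q T)

/-- The left descent set of a permutation word. -/
def DesL (n : ℕ) (w : List ℕ) : Set ℕ :=
  {i | 1 ≤ i ∧ i < n ∧ w.idxOf (i + 1) < w.idxOf i}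

/-- Index of the row of `t` containing the entry `v`. -/
def rowOf (t : List (List ℕ)) (v : ℕ) : ℕ := t.findIdx (fun r => decide (v ∈ r))

/-- The descent set of a standard Young tableau with `n` cells. -/
def DesT (n : ℕ) (t : List (List ℕ)) : Set ℕ :=
  {i | 1 ≤ i ∧ i < n ∧ rowOf t i < rowOf t (i + 1)}

/-- The transpose (conjugate) of a tableau. -/
def transposeTab (t : List (List ℕ)) : List (List ℕ) :=
  (List.range (t.headD []).length).map (fun c => t.filterMap (fun r => r[c]?))

/-- Schützenberger's evacuation `T^evac`: the insertion tableau of the word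
obtained from any word in the Knuth class of `T` (here, its reading word) by
reversing it and complementing each letter `x ↦ n+1-x`. -/
def evacTab (n : ℕ) (t : List (List ℕ)) : List (List ℕ) :=
  RSK (((readWord t).map (fun x => n + 1 - x)).reverse)

/-- Dominance order on partitions (as lists): `domLE l m` iff every partial
sum of `l` is at most the corresponding partial sum of `m`. -/
def domLE (l m : List ℕ) : Prop := ∀ k, (l.take k).sum ≤ (m.take k).sum

/-- The inner subtableau `T_[1,k]` of a standard Young tableau:
the cells with entries `1,…,k`. -/
def innerTab (k : ℕ) (t : List (List ℕ)) : List (List ℕ) :=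
  (t.map (fun r => r.filter (fun x => decide (x ≤ k)))).filter (fun r => !r.isEmpty)

/-- The inner tableau translation map `V_[R,R']`: in a tableau `t` with inner
tableau `R`, replace the subtableau `R` by the same-shape tableau `R'`. -/
def replaceInner (R R' t : List (List ℕ)) : List (List ℕ) :=
  (List.range t.length).map
    (fun r => R'.getD r [] ++ (t.getD r []).drop (R.getD r []).length)

/-- Increase all entries of a tableau by `k`. -/
def shiftTab (k : ℕ) (t : List (List ℕ)) : List (List ℕ) := t.map (List.map (· + k))

/-- Concatenate two tableaux row by row. -/
def rowCat (S T : List (List ℕ)) : List (List ℕ) :=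
  (List.range (max S.length T.length)).map (fun r => S.getD r [] ++ T.getD r [])

/-- `S \ T`: rows obtained by concatenating the rows of `T̄` (entries of `T`
shifted up by `k`) to the right of the rows of `S`, where `S ∈ SYT_k`. -/
def tabUnder (k : ℕ) (S T : List (List ℕ)) : List (List ℕ) := rowCat S (shiftTab k T)

/-- `S / T`: columns obtained by concatenating the columns of `T̄` (entries of
`T` shifted up by `k`) under the columns of `S`, where `S ∈ SYT_k`. -/
def tabOver (k : ℕ) (S T : List (List ℕ)) : List (List ℕ) :=
  transposeTab (rowCat (transposeTab S) (transposeTab (shiftTab k T)))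

/-- Reverse row bumping: replace the largest entry of the row smaller than `x`
by `x`, returning the new row and the entry that was bumped out upward. -/
def revBumpRow : List ℕ → ℕ → List ℕ × ℕ
  | [], x => ([], x)
  | [y], x => if y < x then ([x], y) else ([y], x)
  | y :: z :: ys, x =>
    if z < x then
      let p := revBumpRow (z :: ys) x
      (y :: p.1, p.2)
    else (x :: z :: ys, y)

/-- Reverse insertion of a value `x` upward through a stack of rows
(listed top to bottom, processed bottom to top). -/
def revInsertAux : List (List ℕ) → ℕ → List (List ℕ) × ℕ
  | [], x => ([], x)
  | r :: rs, x =>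
    let p := revInsertAux rs x
    let q := revBumpRow r p.2
    (q.1 :: p.1, q.2)

/-- `T↑A` and `η(T↑A)`: reverse RSK insertion applied to the tableau `t`
through the corner cell at the end of row `r`; returns the resulting tableau
together with the letter that leaves the tableau. -/
def revInsert (t : List (List ℕ)) (r : ℕ) : List (List ℕ) × ℕ :=
  let row := t.getD r []
  let p := revInsertAux (t.take r) (row.getLastD 0)
  ((p.1 ++ [row.dropLast] ++ t.drop (r + 1)).filter (fun l => !l.isEmpty), p.2)

/-- A partition (as a list of row lengths) is a hook `(a,1,1,…,1)`. -/
def IsHook (sh : List ℕ) : Prop := ∀ a ∈ sh.tail, a = 1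
/-! ### Auxiliary lemmas: row insertion -/

theorem insertRow_all_lt {R : List ℕ} {x : ℕ} (h : ∀ a ∈ R, a < x) :
    insertRow R x = (R ++ [x], none) := by
  induction R with
  | nil => rfl
  | cons r R ih =>
      have hr : ¬ x < r := by have := h r (by simp); omega
      simp [insertRow, hr, ih (fun a ha => h a (by simp [ha]))]

theorem insertRow_split {A B : List ℕ} {b x : ℕ} (hA : ∀ a ∈ A, a < x) (hb : x < b) :
    insertRow (A ++ b :: B) x = (A ++ x :: B, some b) := by
  induction A with
  | nil => simp [insertRow, hb]
  | cons a A ih =>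
      have ha : ¬ x < a := by have := hA a (by simp); omega
      simp [insertRow, ha, ih (fun a ha => hA a (by simp [ha]))]

theorem sorted_split {R : List ℕ} {x : ℕ} (hs : R.Pairwise (· < ·)) (hx : x ∉ R) :
    ∃ A B, R = A ++ B ∧ (∀ a ∈ A, a < x) ∧ (∀ b ∈ B, x < b) := by
  induction R with
  | nil => exact ⟨[], [], by simp, by simp, by simp⟩
  | cons r R ih =>
      rcases List.pairwise_cons.1 hs with ⟨hr, hs'⟩
      by_cases h : r < x
      · obtain ⟨A, B, h1, h2, h3⟩ := ih hs' (by simp at hx; tauto)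
        exact ⟨r :: A, B, by simp [h1], by
          intro a ha; rcases List.mem_cons.1 ha with h'|h'
          · omega
          · exact h2 a h', h3⟩
      · refine ⟨[], r :: R, by simp, by simp, ?_⟩
        intro b hb
        have hrx : x < r := by
          have : r ≠ x := by intro e; exact hx (by simp [e])
          omega
        rcases List.mem_cons.1 hb with h'|h'
        · omega
        · have := hr b h'; omega

theorem sorted_append_iff {A B : List ℕ} :
    (A ++ B).Pairwise (· < ·) ↔
      A.Pairwise (· < ·) ∧ B.Pairwise (· < ·) ∧ ∀ a ∈ A, ∀ b ∈ B, a < b :=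
  List.pairwise_append

/-- option-aware multiset statement for insertRow -/
theorem insertRow_perm (R : List ℕ) (x : ℕ) :
    ((insertRow R x).2.toList ++ (insertRow R x).1).Perm (x :: R) := by
  induction R with
  | nil => simp [insertRow]
  | cons r R ih =>
      by_cases h : x < r
      · simp [insertRow, h]
        exact List.Perm.swap' _ _ (List.Perm.refl _)
      · simp only [insertRow, h, if_false]
        refine List.Perm.trans ?_ ((ih.cons r).trans (List.Perm.swap _ _ _))
        cases hIR : (insertRow R x).2 with
        | none => simp [hIR]
        | some b => simp [hIR]; exact List.Perm.swap' _ _ (List.Perm.refl _)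
/-! ### insertTab basics -/

theorem insertTab_cons_none {R R' : List ℕ} {ts : List (List ℕ)} {x : ℕ}
    (h : insertRow R x = (R', none)) : insertTab (R :: ts) x = R' :: ts := by
  simp [insertTab, h]

theorem insertTab_cons_some {R R' : List ℕ} {ts : List (List ℕ)} {x b : ℕ}
    (h : insertRow R x = (R', some b)) :
    insertTab (R :: ts) x = R' :: insertTab ts b := by
  simp [insertTab, h]

theorem insertTab_flatten_perm (t : List (List ℕ)) (x : ℕ) :
    (insertTab t x).flatten.Perm (x :: t.flatten) := by
  induction t generalizing x with
  | nil => simp [insertTab]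
  | cons R ts ih =>
      cases hIR : insertRow R x with
      | mk R' o =>
        have hp := insertRow_perm R x
        rw [hIR] at hp
        cases o with
        | none =>
            rw [insertTab_cons_none hIR]
            simp only [Option.toList, List.nil_append] at hp
            simpa using hp.append_right ts.flatten
        | some b =>
            rw [insertTab_cons_some hIR]
            simp only [Option.toList, List.singleton_append] at hp
            simp only [List.flatten_cons]
            refine ((ih b).append_left R').trans (List.Perm.trans List.perm_middle ?_)
            simpa using hp.append_right ts.flatten
theorem insertRow_fst_sorted {R : List ℕ} {x : ℕ} (hs : R.Pairwise (· < ·)) (hx : x ∉ R) :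
    (insertRow R x).1.Pairwise (· < ·) := by
  obtain ⟨A, B, rfl, hA, hB⟩ := sorted_split hs hx
  rcases sorted_append_iff.1 hs with ⟨hsA, hsB, hAB⟩
  cases B with
  | nil =>
      rw [insertRow_all_lt (by simpa using hA)]
      simpa [sorted_append_iff] using ⟨hsA, fun a ha => hA a ha⟩
  | cons b B' =>
      rw [insertRow_split hA (hB b (by simp))]
      simp only
      rw [show A ++ x :: B' = A ++ [x] ++ B' by simp]
      rw [sorted_append_iff, sorted_append_iff]
      rcases List.pairwise_cons.1 hsB with ⟨hbB', hsB'⟩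
      refine ⟨⟨hsA, by simp, by simpa using hA⟩, hsB', ?_⟩
      intro a ha b' hb'
      rcases List.mem_append.1 ha with h|h
      · exact lt_trans (hA a h) (hB b' (by simp [hb']))
      · simp at h; subst h; exact hB b' (by simp [hb'])

theorem insertRow_bumped_lt {R R' : List ℕ} {x b : ℕ}
    (h : insertRow R x = (R', some b)) : x < b := by
  induction R generalizing R' with
  | nil => simp [insertRow] at h
  | cons r R ih =>
      by_cases hc : x < r
      · simp [insertRow, hc] at h
        omega
      · simp only [insertRow, hc, if_false] at h
        cases hIR : insertRow R x with
        | mk R'' o =>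
          rw [hIR] at h
          cases o with
          | none => simp at h
          | some c =>
              simp at h
              have := ih (R' := R'') (by rw [hIR, h.2])
              omega

theorem insertRow_bumped_mem {R R' : List ℕ} {x b : ℕ}
    (h : insertRow R x = (R', some b)) : b ∈ R := by
  have hp := insertRow_perm R x
  rw [h] at hp
  have hm : b ∈ x :: R := hp.subset (by simp)
  have := insertRow_bumped_lt h
  rcases List.mem_cons.1 hm with h'|h'
  · omega
  · exact h'

theorem insertRow_fst_subset {R : List ℕ} {x : ℕ} :
    ∀ a ∈ (insertRow R x).1, a ∈ x :: R := by
  intro a ha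
  have hp := insertRow_perm R x
  exact hp.subset (by simp [ha])

theorem insertTab_rows_sorted {t : List (List ℕ)} {x : ℕ}
    (hs : ∀ r ∈ t, r.Pairwise (· < ·)) (hnd : (x :: t.flatten).Nodup) :
    ∀ r ∈ insertTab t x, r.Pairwise (· < ·) := by
  induction t generalizing x with
  | nil => intro r hr; simp [insertTab] at hr; simp [hr]
  | cons R ts ih =>
      have hxR : x ∉ R := by
        simp only [List.flatten_cons, List.nodup_cons, List.mem_append] at hnd
        exact fun h => hnd.1 (Or.inl h)
      cases hIR : insertRow R x with
      | mk R' o =>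
        have hR's : R'.Pairwise (· < ·) := by
          have := insertRow_fst_sorted (hs R (by simp)) hxR
          rw [hIR] at this; exact this
        cases o with
        | none =>
            rw [insertTab_cons_none hIR]
            intro r hr
            rcases List.mem_cons.1 hr with h|h
            · subst h; exact hR's
            · exact hs r (by simp [h])
        | some b =>
            rw [insertTab_cons_some hIR]
            intro r hr
            rcases List.mem_cons.1 hr with h|h
            · subst h; exact hR's
            · refine ih (fun r hr => hs r (by simp [hr])) ?_ r h
              have hbR : b ∈ R := insertRow_bumped_mem hIR
              simp only [List.flatten_cons, List.nodup_cons, List.mem_cons,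
                List.mem_append] at hnd
              rcases hnd with ⟨hx, hnd⟩
              rcases (List.nodup_append.1 hnd) with ⟨hndR, hndts, hdisj⟩
              simp only [List.nodup_cons]
              exact ⟨fun hb => ((fun hb => hdisj b hbR b hb rfl)) hb, hndts⟩
/-! ### helpers for case analyses -/

theorem nodup3 {u b f : ℕ} {fl : List ℕ} (hub : u ≠ b) (huf : u ≠ f) (hbf : b ≠ f)
    (hu : u ∉ fl) (hb : b ∉ fl) (hf : f ∉ fl) (hfl : fl.Nodup) :
    (u :: b :: f :: fl).Nodup := by
  simp [List.nodup_cons, hub, huf, hbf, hu, hb, hf, hfl]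

theorem nodup_head_facts {x y z : ℕ} {R fl : List ℕ}
    (hnd : (x :: y :: z :: (R ++ fl)).Nodup) :
    (x ≠ y ∧ x ≠ z ∧ y ≠ z) ∧ (x ∉ R ∧ y ∉ R ∧ z ∉ R) ∧ (x ∉ fl ∧ y ∉ fl ∧ z ∉ fl) ∧
      R.Nodup ∧ fl.Nodup ∧ (∀ a ∈ R, a ∉ fl) := by
  simp only [List.nodup_cons, List.mem_cons, List.mem_append, not_or] at hnd
  obtain ⟨⟨hxy, hxz, hxR, hxf⟩, ⟨hyz, hyR, hyf⟩, ⟨hzR, hzf⟩, hnd⟩ := hnd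
  rcases List.nodup_append.1 hnd with ⟨h1, h2, h3⟩
  exact ⟨⟨hxy, hxz, hyz⟩, ⟨hxR, hyR, hzR⟩, ⟨hxf, hyf, hzf⟩, h1, h2, fun a ha hb => h3 a ha a hb rfl⟩
theorem all_lt_append {A B : List ℕ} {v : ℕ} (hA : ∀ a ∈ A, a < v) (hB : ∀ a ∈ B, a < v) :
    ∀ a ∈ A ++ B, a < v := by
  intro a ha; rcases List.mem_append.1 ha with h|h
  · exact hA a h
  · exact hB a h

theorem all_lt_cons {x v : ℕ} {B : List ℕ} (h : x < v) (hB : ∀ a ∈ B, a < v) :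
    ∀ a ∈ x :: B, a < v := by
  intro a ha; rcases List.mem_cons.1 ha with h'|h'
  · omega
  · exact hB a h'

theorem all_lt_of_lt {A : List ℕ} {v w : ℕ} (h : ∀ a ∈ A, a < v) (hv : v < w) :
    ∀ a ∈ A, a < w := fun a ha => lt_trans (h a ha) hv

theorem all_lt_nil {v : ℕ} : ∀ a ∈ ([] : List ℕ), a < v := by simp

/-- Knuth invariance, move 1: for `x < y < z`, inserting `y, x, z` equals
inserting `y, z, x`. -/
theorem E1 (t : List (List ℕ)) : ∀ x y z : ℕ, (∀ r ∈ t, r.Pairwise (· < ·)) →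
    (x :: y :: z :: t.flatten).Nodup → x < y → y < z →
    insertTab (insertTab (insertTab t y) x) z
      = insertTab (insertTab (insertTab t y) z) x := by
  induction t with
  | nil =>
      intro x y z _ _ hxy hyz
      have h2 : insertRow [y] x = ([x], some y) :=
        insertRow_split (A := []) (B := []) (by simp) hxy
      have h3 : insertRow [x] z = ([x, z], none) :=
        insertRow_all_lt (by intro a ha; simp at ha; omega)
      have h4 : insertRow [y] z = ([y, z], none) :=
        insertRow_all_lt (by intro a ha; simp at ha; omega)
      have h5 : insertRow [y, z] x = ([x, z], some y) :=
        insertRow_split (A := []) (B := [z]) (by simp) hxy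
      show insertTab (insertTab [[y]] x) z = insertTab (insertTab [[y]] z) x
      rw [insertTab_cons_some h2, show insertTab [] y = [[y]] from rfl,
        insertTab_cons_none h3, insertTab_cons_none h4, insertTab_cons_some h5]
      rfl
  | cons R ts ih =>
      intro x y z hs hnd hxy hyz
      obtain ⟨⟨hxy', hxz', hyz'⟩, ⟨hxR, hyR, hzR⟩, ⟨hxf, hyf, hzf⟩, hRnd, hflnd, hdisj⟩ :=
        nodup_head_facts (R := R) (fl := ts.flatten) (by simpa using hnd)
      have hsR : R.Pairwise (· < ·) := hs R (by simp)
      have hsts : ∀ r ∈ ts, r.Pairwise (· < ·) := fun r hr => hs r (by simp [hr])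
      show insertTab (insertTab (insertTab (R :: ts) y) x) z
        = insertTab (insertTab (insertTab (R :: ts) y) z) x
      obtain ⟨A1, B1, hR, hA1, hB1⟩ := sorted_split hsR hyR
      cases B1 with
      | nil =>
          -- y appends to R
          rw [List.append_nil] at hR
          have hRy : ∀ a ∈ R, a < y := by rw [hR]; exact hA1
          have hy : insertTab (R :: ts) y = (R ++ [y]) :: ts :=
            insertTab_cons_none (insertRow_all_lt hRy)
          rw [hy]
          obtain ⟨P, Q, hR2, hP, hQ⟩ := sorted_split hsR hxR
          cases Q with
          | nil =>
              rw [List.append_nil] at hR2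
              have hRx : ∀ a ∈ R, a < x := by rw [hR2]; exact hP
              have h2 : insertRow (R ++ [y]) x = (R ++ x :: [], some y) :=
                insertRow_split hRx hxy
              rw [insertTab_cons_some h2]
              have h3 : insertRow (R ++ x :: []) z = ((R ++ x :: []) ++ [z], none) :=
                insertRow_all_lt (all_lt_append (all_lt_of_lt hRx (lt_trans hxy hyz))
                  (all_lt_cons (lt_trans hxy hyz) all_lt_nil))
              rw [insertTab_cons_none h3]
              have h4 : insertRow (R ++ [y]) z = ((R ++ [y]) ++ [z], none) :=
                insertRow_all_lt (all_lt_append (all_lt_of_lt hRy hyz)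
                  (all_lt_cons hyz all_lt_nil))
              rw [insertTab_cons_none h4]
              rw [show (R ++ [y]) ++ [z] = R ++ y :: [z] by simp]
              have h5 : insertRow (R ++ y :: [z]) x = (R ++ x :: [z], some y) :=
                insertRow_split hRx hxy
              rw [insertTab_cons_some h5]
              simp
          | cons q Q' =>
              -- x bumps q, q < y
              have hqy : q < y := hRy q (by rw [hR2]; simp)
              have hxq : x < q := hQ q (by simp)
              have hQ'y : ∀ a ∈ Q', a < y := fun a ha => hRy a (by rw [hR2]; simp [ha])
              have h2 : insertRow (R ++ [y]) x = (P ++ x :: (Q' ++ [y]), some q) := by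
                rw [hR2, show (P ++ q :: Q') ++ [y] = P ++ q :: (Q' ++ [y]) by simp]
                exact insertRow_split hP hxq
              rw [insertTab_cons_some h2]
              have h3 : insertRow (P ++ x :: (Q' ++ [y])) z
                  = ((P ++ x :: (Q' ++ [y])) ++ [z], none) :=
                insertRow_all_lt (all_lt_append (all_lt_of_lt hP (by omega))
                  (all_lt_cons (by omega) (all_lt_append (all_lt_of_lt hQ'y hyz)
                    (all_lt_cons hyz all_lt_nil))))
              rw [insertTab_cons_none h3]
              have h4 : insertRow (R ++ [y]) z = ((R ++ [y]) ++ [z], none) :=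
                insertRow_all_lt (all_lt_append (all_lt_of_lt hRy hyz)
                  (all_lt_cons hyz all_lt_nil))
              rw [insertTab_cons_none h4]
              rw [show (R ++ [y]) ++ [z] = P ++ q :: (Q' ++ y :: [z]) by rw [hR2]; simp]
              have h5 : insertRow (P ++ q :: (Q' ++ y :: [z])) x
                  = (P ++ x :: (Q' ++ y :: [z]), some q) := insertRow_split hP hxq
              rw [insertTab_cons_some h5]
              simp
      | cons b B' =>
          -- y bumps b
          have hyb : y < b := hB1 b (by simp)
          have hbB' : (b :: B').Pairwise (· < ·) := (sorted_append_iff.1 (hR ▸ hsR)).2.1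
          have hsB' : B'.Pairwise (· < ·) := (List.pairwise_cons.1 hbB').2
          have hbB'lt : ∀ a ∈ B', b < a := (List.pairwise_cons.1 hbB').1
          have hbR : b ∈ R := by rw [hR]; simp
          have hB'R : ∀ a ∈ B', a ∈ R := by intro a ha; rw [hR]; simp [ha]
          have hsA1 : A1.Pairwise (· < ·) := (sorted_append_iff.1 (hR ▸ hsR)).1
          have hy : insertTab (R :: ts) y = (A1 ++ y :: B') :: insertTab ts b := by
            refine insertTab_cons_some ?_
            rw [hR]; exact insertRow_split hA1 hyb
          rw [hy]
          have hxA1 : x ∉ A1 := fun h => hxR (by rw [hR]; simp [h])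
          have hzB' : z ∉ B' := fun h => hzR (hB'R z h)
          obtain ⟨P, D, hA1e, hP, hD⟩ := sorted_split hsA1 hxA1
          obtain ⟨E, F, hB'e, hE, hF⟩ := sorted_split hsB' hzB'
          have hEy : ∀ a ∈ E, y < a := fun a ha => hbB'lt a (by rw [hB'e]; simp [ha]) |> fun h => lt_trans hyb h
          -- nodup facts for IH
          have hbf : b ∉ ts.flatten := hdisj b hbR
          have hyfl : y ∉ ts.flatten := hyf
          cases D with
          | nil =>
              -- x bumps y itself
              rw [List.append_nil] at hA1e
              subst hA1e
              have h2 : insertRow (A1 ++ y :: B') x = (A1 ++ x :: B', some y) :=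
                insertRow_split hP hxy
              rw [insertTab_cons_some h2]
              cases F with
              | nil =>
                  rw [List.append_nil] at hB'e
                  subst hB'e
                  have hB'z : ∀ a ∈ B', a < z := hE
                  have h3 : insertRow (A1 ++ x :: B') z = ((A1 ++ x :: B') ++ [z], none) :=
                    insertRow_all_lt (all_lt_append (all_lt_of_lt hP (by omega))
                      (all_lt_cons (by omega) hB'z))
                  rw [insertTab_cons_none h3]
                  have h4 : insertRow (A1 ++ y :: B') z = ((A1 ++ y :: B') ++ [z], none) :=
                    insertRow_all_lt (all_lt_append (all_lt_of_lt hP (by omega))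
                      (all_lt_cons hyz hB'z))
                  rw [insertTab_cons_none h4]
                  rw [show (A1 ++ y :: B') ++ [z] = A1 ++ y :: (B' ++ [z]) by simp]
                  have h5 : insertRow (A1 ++ y :: (B' ++ [z])) x
                      = (A1 ++ x :: (B' ++ [z]), some y) := insertRow_split hP hxy
                  rw [insertTab_cons_some h5]
                  simp
              | cons f F' =>
                  have hzf : z < f := hF f (by simp)
                  have hfR : f ∈ R := hB'R f (by rw [hB'e]; simp)
                  have hbf' : b < f := hbB'lt f (by rw [hB'e]; simp)
                  have h3 : insertRow (A1 ++ x :: B') z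
                      = ((A1 ++ x :: E) ++ z :: F', some f) := by
                    rw [hB'e, show A1 ++ x :: (E ++ f :: F') = (A1 ++ x :: E) ++ f :: F' by simp]
                    exact insertRow_split (all_lt_append (all_lt_of_lt hP (by omega))
                      (all_lt_cons (by omega) hE)) hzf
                  rw [insertTab_cons_some h3]
                  have h4 : insertRow (A1 ++ y :: B') z
                      = ((A1 ++ y :: E) ++ z :: F', some f) := by
                    rw [hB'e, show A1 ++ y :: (E ++ f :: F') = (A1 ++ y :: E) ++ f :: F' by simp]
                    exact insertRow_split (all_lt_append (all_lt_of_lt hP (by omega))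
                      (all_lt_cons hyz hE)) hzf
                  rw [insertTab_cons_some h4]
                  rw [show (A1 ++ y :: E) ++ z :: F' = A1 ++ y :: (E ++ z :: F') by simp]
                  have h5 : insertRow (A1 ++ y :: (E ++ z :: F')) x
                      = (A1 ++ x :: (E ++ z :: F'), some y) := insertRow_split hP hxy
                  rw [insertTab_cons_some h5]
                  have htail : insertTab (insertTab (insertTab ts b) y) f
                      = insertTab (insertTab (insertTab ts b) f) y := by
                    refine ih y b f hsts ?_ hyb hbf'
                    exact nodup3 (by omega) (by omega) (by omega) hyfl hbf
                      (hdisj f hfR) hflnd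
                  rw [htail]
                  simp
          | cons d D' =>
              have hxd : x < d := hD d (by simp)
              have hdy : d < y := hA1 d (by rw [hA1e]; simp)
              have hdR : d ∈ R := by rw [hR, hA1e]; simp
              have hD'y : ∀ a ∈ D', a < y := fun a ha => hA1 a (by rw [hA1e]; simp [ha])
              have h2 : insertRow (A1 ++ y :: B') x
                  = (P ++ x :: (D' ++ y :: B'), some d) := by
                rw [hA1e, show (P ++ d :: D') ++ y :: B' = P ++ d :: (D' ++ y :: B') by simp]
                exact insertRow_split hP hxd
              rw [insertTab_cons_some h2]
              cases F with
              | nil =>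
                  rw [List.append_nil] at hB'e
                  subst hB'e
                  have hB'z : ∀ a ∈ B', a < z := hE
                  have h3 : insertRow (P ++ x :: (D' ++ y :: B')) z
                      = ((P ++ x :: (D' ++ y :: B')) ++ [z], none) :=
                    insertRow_all_lt (all_lt_append (all_lt_of_lt hP (by omega))
                      (all_lt_cons (by omega) (all_lt_append (all_lt_of_lt hD'y hyz)
                        (all_lt_cons hyz hB'z))))
                  rw [insertTab_cons_none h3]
                  have h4 : insertRow (A1 ++ y :: B') z = ((A1 ++ y :: B') ++ [z], none) :=
                    insertRow_all_lt (all_lt_append (all_lt_of_lt hA1 hyz)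
                      (all_lt_cons hyz hB'z))
                  rw [insertTab_cons_none h4]
                  rw [show (A1 ++ y :: B') ++ [z] = P ++ d :: (D' ++ y :: (B' ++ [z]))
                    by rw [hA1e]; simp]
                  have h5 : insertRow (P ++ d :: (D' ++ y :: (B' ++ [z]))) x
                      = (P ++ x :: (D' ++ y :: (B' ++ [z])), some d) := insertRow_split hP hxd
                  rw [insertTab_cons_some h5]
                  simp
              | cons f F' =>
                  have hzf : z < f := hF f (by simp)
                  have hfR : f ∈ R := hB'R f (by rw [hB'e]; simp)
                  have hbf' : b < f := hbB'lt f (by rw [hB'e]; simp)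
                  have h3 : insertRow (P ++ x :: (D' ++ y :: B')) z
                      = ((P ++ x :: (D' ++ y :: E)) ++ z :: F', some f) := by
                    rw [hB'e, show P ++ x :: (D' ++ y :: (E ++ f :: F'))
                      = (P ++ x :: (D' ++ y :: E)) ++ f :: F' by simp]
                    exact insertRow_split (all_lt_append (all_lt_of_lt hP (by omega))
                      (all_lt_cons (by omega) (all_lt_append (all_lt_of_lt hD'y hyz)
                        (all_lt_cons hyz hE)))) hzf
                  rw [insertTab_cons_some h3]
                  have h4 : insertRow (A1 ++ y :: B') z
                      = ((A1 ++ y :: E) ++ z :: F', some f) := by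
                    rw [hB'e, show A1 ++ y :: (E ++ f :: F') = (A1 ++ y :: E) ++ f :: F' by simp]
                    exact insertRow_split (all_lt_append (all_lt_of_lt hA1 hyz)
                      (all_lt_cons hyz hE)) hzf
                  rw [insertTab_cons_some h4]
                  rw [show (A1 ++ y :: E) ++ z :: F' = P ++ d :: (D' ++ y :: (E ++ z :: F'))
                    by rw [hA1e]; simp]
                  have h5 : insertRow (P ++ d :: (D' ++ y :: (E ++ z :: F'))) x
                      = (P ++ x :: (D' ++ y :: (E ++ z :: F')), some d) := insertRow_split hP hxd
                  rw [insertTab_cons_some h5]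
                  have htail : insertTab (insertTab (insertTab ts b) d) f
                      = insertTab (insertTab (insertTab ts b) f) d := by
                    refine ih d b f hsts ?_ (by omega) hbf'
                    exact nodup3 (by omega) (by omega) (by omega) (hdisj d hdR) hbf
                      (hdisj f hfR) hflnd
                  rw [htail]
                  simp
/-- Knuth invariance, move 2: for `x < y < z`, inserting `x, z, y` equals
inserting `z, x, y`. -/
theorem E2 (t : List (List ℕ)) : ∀ x y z : ℕ, (∀ r ∈ t, r.Pairwise (· < ·)) →
    (x :: y :: z :: t.flatten).Nodup → x < y → y < z →
    insertTab (insertTab (insertTab t x) z) y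
      = insertTab (insertTab (insertTab t z) x) y := by
  induction t with
  | nil =>
      intro x y z _ _ hxy hyz
      have h1 : insertRow [x] z = ([x, z], none) :=
        insertRow_all_lt (by intro a ha; simp at ha; omega)
      have h2 : insertRow [x, z] y = ([x, y], some z) :=
        insertRow_split (A := [x]) (B := []) (by intro a ha; simp at ha; omega) hyz
      have h3 : insertRow [z] x = ([x], some z) :=
        insertRow_split (A := []) (B := []) (by simp) (by omega)
      have h4 : insertRow [x] y = ([x, y], none) :=
        insertRow_all_lt (by intro a ha; simp at ha; omega)
      show insertTab (insertTab [[x]] z) y = insertTab (insertTab [[z]] x) y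
      rw [insertTab_cons_none h1, insertTab_cons_some h2, insertTab_cons_some h3,
        show insertTab [] z = [[z]] from rfl, insertTab_cons_none h4]
  | cons R ts ih =>
      intro x y z hs hnd hxy hyz
      obtain ⟨⟨hxy', hxz', hyz'⟩, ⟨hxR, hyR, hzR⟩, ⟨hxf, hyf, hzf⟩, hRnd, hflnd, hdisj⟩ :=
        nodup_head_facts (R := R) (fl := ts.flatten) (by simpa using hnd)
      have hsR : R.Pairwise (· < ·) := hs R (by simp)
      have hsts : ∀ r ∈ ts, r.Pairwise (· < ·) := fun r hr => hs r (by simp [hr])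
      show insertTab (insertTab (insertTab (R :: ts) x) z) y
        = insertTab (insertTab (insertTab (R :: ts) z) x) y
      obtain ⟨P, Q, hR, hP, hQ⟩ := sorted_split hsR hxR
      cases Q with
      | nil =>
          rw [List.append_nil] at hR
          have hRx : ∀ a ∈ R, a < x := by rw [hR]; exact hP
          rw [insertTab_cons_none (insertRow_all_lt hRx)]
          have h1 : insertRow (R ++ [x]) z = ((R ++ [x]) ++ [z], none) :=
            insertRow_all_lt (all_lt_append (all_lt_of_lt hRx (by omega))
              (all_lt_cons (by omega) all_lt_nil))
          rw [insertTab_cons_none h1]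
          rw [show (R ++ [x]) ++ [z] = (R ++ [x]) ++ z :: [] by simp]
          have h2 : insertRow ((R ++ [x]) ++ z :: []) y = ((R ++ [x]) ++ y :: [], some z) :=
            insertRow_split (all_lt_append (all_lt_of_lt hRx hxy)
              (all_lt_cons hxy all_lt_nil)) hyz
          rw [insertTab_cons_some h2]
          have h3 : insertRow R z = (R ++ [z], none) :=
            insertRow_all_lt (all_lt_of_lt hRx (by omega))
          rw [insertTab_cons_none h3]
          rw [show R ++ [z] = R ++ z :: [] by simp]
          have h4 : insertRow (R ++ z :: []) x = (R ++ x :: [], some z) :=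
            insertRow_split hRx (by omega)
          rw [insertTab_cons_some h4]
          have h5 : insertRow (R ++ x :: []) y = ((R ++ x :: []) ++ [y], none) :=
            insertRow_all_lt (all_lt_append (all_lt_of_lt hRx hxy)
              (all_lt_cons hxy all_lt_nil))
          rw [insertTab_cons_none h5]
      | cons p Q' =>
          have hxp : x < p := hQ p (by simp)
          have hpQ : (p :: Q').Pairwise (· < ·) := (sorted_append_iff.1 (hR ▸ hsR)).2.1
          have hsQ' : Q'.Pairwise (· < ·) := (List.pairwise_cons.1 hpQ).2
          have hpQ' : ∀ a ∈ Q', p < a := (List.pairwise_cons.1 hpQ).1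
          have hpR : p ∈ R := by rw [hR]; simp
          have hQ'R : ∀ a ∈ Q', a ∈ R := by intro a ha; rw [hR]; simp [ha]
          have hx : insertTab (R :: ts) x = (P ++ x :: Q') :: insertTab ts p := by
            refine insertTab_cons_some ?_
            rw [hR]; exact insertRow_split hP hxp
          rw [hx]
          have hpz : p ≠ z := fun h => hzR (h ▸ hpR)
          rcases lt_or_gt_of_ne hpz with hpz' | hpz'
          · -- Case A : p < z
            have hzQ' : z ∉ Q' := fun h => hzR (hQ'R z h)
            obtain ⟨E, F, hQ'e, hE, hF⟩ := sorted_split hsQ' hzQ'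
            have hyE : y ∉ E := fun h => hyR (hQ'R y (by rw [hQ'e]; simp [h]))
            have hsE : E.Pairwise (· < ·) := (sorted_append_iff.1 (hQ'e ▸ hsQ')).1
            obtain ⟨E1, E2, hEe, hE1, hE2⟩ := sorted_split hsE hyE
            cases F with
            | cons f F' =>
                have hzf2 : z < f := hF f (by simp)
                have hfR : f ∈ R := hQ'R f (by rw [hQ'e]; simp)
                have hpf : p < f := hpQ' f (by rw [hQ'e]; simp)
                have h1 : insertRow (P ++ x :: Q') z = ((P ++ x :: E) ++ z :: F', some f) := by
                  rw [hQ'e, show P ++ x :: (E ++ f :: F') = (P ++ x :: E) ++ f :: F' by simp]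
                  exact insertRow_split (all_lt_append (all_lt_of_lt hP (by omega))
                    (all_lt_cons (by omega) hE)) hzf2
                rw [insertTab_cons_some h1]
                have h2 : insertRow R z = ((P ++ p :: E) ++ z :: F', some f) := by
                  rw [hR, hQ'e, show P ++ p :: (E ++ f :: F') = (P ++ p :: E) ++ f :: F' by simp]
                  exact insertRow_split (all_lt_append (all_lt_of_lt hP (by omega))
                    (all_lt_cons hpz' hE)) hzf2
                rw [insertTab_cons_some h2]
                rw [show (P ++ p :: E) ++ z :: F' = P ++ p :: (E ++ z :: F') by simp]
                have h3 : insertRow (P ++ p :: (E ++ z :: F')) x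
                    = (P ++ x :: (E ++ z :: F'), some p) := insertRow_split hP hxp
                rw [insertTab_cons_some h3]
                cases E2 with
                | cons e E2' =>
                    have hye : y < e := hE2 e (by simp)
                    have heE : e ∈ E := by rw [hEe]; simp
                    have heR : e ∈ R := hQ'R e (by rw [hQ'e, hEe]; simp)
                    have hpe : p < e := hpQ' e (by rw [hQ'e, hEe]; simp)
                    have hez : e < z := hE e heE
                    have h4 : insertRow ((P ++ x :: E) ++ z :: F') y
                        = ((P ++ x :: E1) ++ y :: (E2' ++ z :: F'), some e) := by
                      rw [hEe, show (P ++ x :: (E1 ++ e :: E2')) ++ z :: F'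
                        = (P ++ x :: E1) ++ e :: (E2' ++ z :: F') by simp]
                      exact insertRow_split (all_lt_append (all_lt_of_lt hP (by omega))
                        (all_lt_cons hxy hE1)) hye
                    rw [insertTab_cons_some h4]
                    have h5 : insertRow (P ++ x :: (E ++ z :: F')) y
                        = ((P ++ x :: E1) ++ y :: (E2' ++ z :: F'), some e) := by
                      rw [hEe, show P ++ x :: ((E1 ++ e :: E2') ++ z :: F')
                        = (P ++ x :: E1) ++ e :: (E2' ++ z :: F') by simp]
                      exact insertRow_split (all_lt_append (all_lt_of_lt hP (by omega))
                        (all_lt_cons hxy hE1)) hye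
                    rw [insertTab_cons_some h5]
                    have htail : insertTab (insertTab (insertTab ts p) f) e
                        = insertTab (insertTab (insertTab ts f) p) e := by
                      refine ih p e f hsts ?_ hpe (by omega)
                      exact nodup3 (by omega) (by omega) (by omega) (hdisj p hpR)
                        (hdisj e heR) (hdisj f hfR) hflnd
                    rw [htail]
                | nil =>
                    rw [List.append_nil] at hEe
                    have hEy : ∀ a ∈ E, a < y := by rw [hEe]; exact hE1
                    have h4 : insertRow ((P ++ x :: E) ++ z :: F') y
                        = ((P ++ x :: E) ++ y :: F', some z) :=
                      insertRow_split (all_lt_append (all_lt_of_lt hP (by omega))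
                        (all_lt_cons hxy hEy)) hyz
                    rw [insertTab_cons_some h4]
                    rw [show P ++ x :: (E ++ z :: F') = (P ++ x :: E) ++ z :: F' by simp]
                    rw [insertTab_cons_some h4]
                    have htail : insertTab (insertTab (insertTab ts p) f) z
                        = insertTab (insertTab (insertTab ts f) p) z := by
                      refine ih p z f hsts ?_ hpz' hzf2
                      exact nodup3 (by omega) (by omega) (by omega) (hdisj p hpR)
                        hzf (hdisj f hfR) hflnd
                    rw [htail]
            | nil =>
                rw [List.append_nil] at hQ'e
                have hQ'z : ∀ a ∈ Q', a < z := by rw [hQ'e]; exact hE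
                have h1 : insertRow (P ++ x :: Q') z = ((P ++ x :: Q') ++ [z], none) :=
                  insertRow_all_lt (all_lt_append (all_lt_of_lt hP (by omega))
                    (all_lt_cons (by omega) hQ'z))
                rw [insertTab_cons_none h1]
                have h2 : insertRow R z = (R ++ [z], none) := by
                  refine insertRow_all_lt ?_
                  rw [hR]
                  exact all_lt_append (all_lt_of_lt hP (by omega))
                    (all_lt_cons hpz' hQ'z)
                rw [insertTab_cons_none h2]
                rw [show R ++ [z] = P ++ p :: (Q' ++ [z]) by rw [hR]; simp]
                have h3 : insertRow (P ++ p :: (Q' ++ [z])) x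
                    = (P ++ x :: (Q' ++ [z]), some p) := insertRow_split hP hxp
                rw [insertTab_cons_some h3]
                cases E2 with
                | cons e E2' =>
                    have hye : y < e := hE2 e (by simp)
                    have hez : e < z := hE e (by rw [hEe]; simp)
                    have h4 : insertRow ((P ++ x :: Q') ++ [z]) y
                        = ((P ++ x :: E1) ++ y :: (E2' ++ [z]), some e) := by
                      rw [hQ'e, hEe, show (P ++ x :: (E1 ++ e :: E2')) ++ [z]
                        = (P ++ x :: E1) ++ e :: (E2' ++ [z]) by simp]
                      exact insertRow_split (all_lt_append (all_lt_of_lt hP (by omega))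
                        (all_lt_cons hxy hE1)) hye
                    rw [insertTab_cons_some h4]
                    have h5 : insertRow (P ++ x :: (Q' ++ [z])) y
                        = ((P ++ x :: E1) ++ y :: (E2' ++ [z]), some e) := by
                      rw [hQ'e, hEe, show P ++ x :: ((E1 ++ e :: E2') ++ [z])
                        = (P ++ x :: E1) ++ e :: (E2' ++ [z]) by simp]
                      exact insertRow_split (all_lt_append (all_lt_of_lt hP (by omega))
                        (all_lt_cons hxy hE1)) hye
                    rw [insertTab_cons_some h5]
                | nil =>
                    rw [List.append_nil] at hEe
                    have hQ'y : ∀ a ∈ Q', a < y := by rw [hQ'e, hEe]; exact hE1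
                    have h4 : insertRow ((P ++ x :: Q') ++ [z]) y
                        = ((P ++ x :: Q') ++ y :: [], some z) := by
                      rw [show (P ++ x :: Q') ++ [z] = (P ++ x :: Q') ++ z :: [] by simp]
                      exact insertRow_split (all_lt_append (all_lt_of_lt hP (by omega))
                        (all_lt_cons hxy hQ'y)) hyz
                    rw [insertTab_cons_some h4]
                    have h5 : insertRow (P ++ x :: (Q' ++ [z])) y
                        = ((P ++ x :: Q') ++ y :: [], some z) := by
                      rw [show P ++ x :: (Q' ++ [z]) = (P ++ x :: Q') ++ z :: [] by simp]
                      exact insertRow_split (all_lt_append (all_lt_of_lt hP (by omega))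
                        (all_lt_cons hxy hQ'y)) hyz
                    rw [insertTab_cons_some h5]
          · -- Case B : z < p
            have h1 : insertRow R z = (P ++ z :: Q', some p) := by
              rw [hR]
              exact insertRow_split (all_lt_of_lt hP (by omega)) hpz'
            rw [insertTab_cons_some h1]
            have h2 : insertRow (P ++ z :: Q') x = (P ++ x :: Q', some z) :=
              insertRow_split hP (by omega)
            rw [insertTab_cons_some h2]
            cases Q' with
            | cons q Q'' =>
                have hpq : p < q := hpQ' q (by simp)
                have hqR : q ∈ R := hQ'R q (by simp)
                have h3 : insertRow (P ++ x :: q :: Q'') z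
                    = ((P ++ [x]) ++ z :: Q'', some q) := by
                  rw [show P ++ x :: q :: Q'' = (P ++ [x]) ++ q :: Q'' by simp]
                  exact insertRow_split (all_lt_append (all_lt_of_lt hP (by omega))
                    (all_lt_cons (by omega) all_lt_nil)) (by omega)
                rw [insertTab_cons_some h3]
                have h4 : insertRow ((P ++ [x]) ++ z :: Q'') y
                    = ((P ++ [x]) ++ y :: Q'', some z) :=
                  insertRow_split (all_lt_append (all_lt_of_lt hP hxy)
                    (all_lt_cons hxy all_lt_nil)) hyz
                rw [insertTab_cons_some h4]
                have h5 : insertRow (P ++ x :: q :: Q'') y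
                    = ((P ++ [x]) ++ y :: Q'', some q) := by
                  rw [show P ++ x :: q :: Q'' = (P ++ [x]) ++ q :: Q'' by simp]
                  exact insertRow_split (all_lt_append (all_lt_of_lt hP hxy)
                    (all_lt_cons hxy all_lt_nil)) (by omega)
                rw [insertTab_cons_some h5]
                have htail : insertTab (insertTab (insertTab ts p) q) z
                    = insertTab (insertTab (insertTab ts p) z) q := by
                  refine (E1 ts z p q hsts ?_ hpz' hpq).symm
                  exact nodup3 (by omega) (by omega) (by omega) hzf (hdisj p hpR)
                    (hdisj q hqR) hflnd
                rw [htail]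
            | nil =>
                have h3 : insertRow (P ++ x :: []) z = ((P ++ x :: []) ++ [z], none) :=
                  insertRow_all_lt (all_lt_append (all_lt_of_lt hP (by omega))
                    (all_lt_cons (by omega) all_lt_nil))
                rw [insertTab_cons_none h3]
                rw [show (P ++ x :: []) ++ [z] = (P ++ x :: []) ++ z :: [] by simp]
                have h4 : insertRow ((P ++ x :: []) ++ z :: []) y
                    = ((P ++ x :: []) ++ y :: [], some z) :=
                  insertRow_split (all_lt_append (all_lt_of_lt hP hxy)
                    (all_lt_cons hxy all_lt_nil)) hyz
                rw [insertTab_cons_some h4]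
                have h5 : insertRow (P ++ x :: []) y = ((P ++ x :: []) ++ [y], none) :=
                  insertRow_all_lt (all_lt_append (all_lt_of_lt hP hxy)
                    (all_lt_cons hxy all_lt_nil))
                rw [insertTab_cons_none h5]
/-! ### Knuth equivalence -/

inductive KStep : List ℕ → List ℕ → Prop
  | move1 (u v : List ℕ) {x y z : ℕ} (h1 : x < y) (h2 : y < z) :
      KStep (u ++ y :: x :: z :: v) (u ++ y :: z :: x :: v)
  | move2 (u v : List ℕ) {x y z : ℕ} (h1 : x < y) (h2 : y < z) :
      KStep (u ++ x :: z :: y :: v) (u ++ z :: x :: y :: v)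

def Knuth (u v : List ℕ) : Prop := Relation.EqvGen KStep u v

theorem KStep.perm {u v : List ℕ} (h : KStep u v) : u.Perm v := by
  cases h with
  | move1 u v h1 h2 =>
      refine List.Perm.append_left u ?_
      exact List.Perm.cons _ (List.Perm.swap _ _ _)
  | move2 u v h1 h2 =>
      refine List.Perm.append_left u ?_
      exact List.Perm.swap _ _ _

theorem Knuth.perm {u v : List ℕ} (h : Knuth u v) : u.Perm v := by
  induction h with
  | rel _ _ h => exact h.perm
  | refl _ => exact List.Perm.refl _
  | symm _ _ _ ih => exact ih.symm
  | trans _ _ _ _ _ ih1 ih2 => exact ih1.trans ih2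

theorem Knuth.refl (u : List ℕ) : Knuth u u := Relation.EqvGen.refl u
theorem Knuth.symm {u v : List ℕ} (h : Knuth u v) : Knuth v u := Relation.EqvGen.symm _ _ h
theorem Knuth.trans {u v w : List ℕ} (h1 : Knuth u v) (h2 : Knuth v w) : Knuth u w :=
  Relation.EqvGen.trans _ _ _ h1 h2
theorem Knuth.of_step {u v : List ℕ} (h : KStep u v) : Knuth u v := Relation.EqvGen.rel _ _ h

theorem KStep.append_left {u v : List ℕ} (w : List ℕ) (h : KStep u v) :
    KStep (w ++ u) (w ++ v) := by
  cases h with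
  | move1 u v h1 h2 =>
      rw [← List.append_assoc, ← List.append_assoc]
      exact KStep.move1 (w ++ u) v h1 h2
  | move2 u v h1 h2 =>
      rw [← List.append_assoc, ← List.append_assoc]
      exact KStep.move2 (w ++ u) v h1 h2

theorem KStep.append_right {u v : List ℕ} (w : List ℕ) (h : KStep u v) :
    KStep (u ++ w) (v ++ w) := by
  cases h with
  | move1 u v h1 h2 =>
      rw [List.append_assoc, List.append_assoc]
      simpa using KStep.move1 u (v ++ w) h1 h2
  | move2 u v h1 h2 =>
      rw [List.append_assoc, List.append_assoc]
      simpa using KStep.move2 u (v ++ w) h1 h2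

theorem Knuth.append_left {u v : List ℕ} (w : List ℕ) (h : Knuth u v) :
    Knuth (w ++ u) (w ++ v) := by
  induction h with
  | rel _ _ h => exact Knuth.of_step (h.append_left w)
  | refl _ => exact Knuth.refl _
  | symm _ _ _ ih => exact ih.symm
  | trans _ _ _ _ _ ih1 ih2 => exact ih1.trans ih2

theorem Knuth.append_right {u v : List ℕ} (w : List ℕ) (h : Knuth u v) :
    Knuth (u ++ w) (v ++ w) := by
  induction h with
  | rel _ _ h => exact Knuth.of_step (h.append_right w)
  | refl _ => exact Knuth.refl _
  | symm _ _ _ ih => exact ih.symm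
  | trans _ _ _ _ _ ih1 ih2 => exact ih1.trans ih2

theorem KStep.rev {u v : List ℕ} (h : KStep u v) : KStep v.reverse u.reverse := by
  cases h with
  | @move1 u v x y z h1 h2 =>
      have e1 : (u ++ y :: x :: z :: v).reverse = v.reverse ++ z :: x :: y :: u.reverse := by
        simp
      have e2 : (u ++ y :: z :: x :: v).reverse = v.reverse ++ x :: z :: y :: u.reverse := by
        simp
      rw [e1, e2]
      exact KStep.move2 v.reverse u.reverse h1 h2
  | @move2 u v x y z h1 h2 =>
      have e1 : (u ++ x :: z :: y :: v).reverse = v.reverse ++ y :: z :: x :: u.reverse := by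
        simp
      have e2 : (u ++ z :: x :: y :: v).reverse = v.reverse ++ y :: x :: z :: u.reverse := by
        simp
      rw [e1, e2]
      exact KStep.move1 v.reverse u.reverse h1 h2

theorem Knuth.rev {u v : List ℕ} (h : Knuth u v) : Knuth u.reverse v.reverse := by
  induction h with
  | rel _ _ h => exact (Knuth.of_step h.rev).symm
  | refl _ => exact Knuth.refl _
  | symm _ _ _ ih => exact ih.symm
  | trans _ _ _ _ _ ih1 ih2 => exact ih1.trans ih2

/-! ### RSK and Knuth equivalence -/

theorem RSK_append (u v : List ℕ) : RSK (u ++ v) = v.foldl insertTab (RSK u) := by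
  simp [RSK, List.foldl_append]

theorem RSK_flatten_perm (w : List ℕ) : (RSK w).flatten.Perm w := by
  induction w using List.reverseRecOn with
  | nil => simp [RSK]
  | append_singleton u a ih =>
      rw [RSK_append]
      simp only [List.foldl_cons, List.foldl_nil]
      refine (insertTab_flatten_perm _ a).trans ?_
      refine (ih.cons a).trans ?_
      simpa using (List.perm_append_comm (l₁ := [a]) (l₂ := u))

theorem RSK_rows_sorted {w : List ℕ} (hw : w.Nodup) : ∀ r ∈ RSK w, r.Pairwise (· < ·) := by
  induction w using List.reverseRecOn with
  | nil => simp [RSK]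
  | append_singleton u a ih =>
      rw [RSK_append]
      simp only [List.foldl_cons, List.foldl_nil]
      have hund : u.Nodup := (List.sublist_append_left u [a]).nodup hw
      refine insertTab_rows_sorted (ih hund) ?_
      have h1 : (a :: u).Nodup := ((List.perm_append_comm (l₁ := u)).nodup hw)
      exact (((RSK_flatten_perm u).cons a).symm.nodup h1)
theorem KStep_RSK {u v : List ℕ} (h : KStep u v) (hnd : u.Nodup) : RSK u = RSK v := by
  cases h with
  | @move1 a b x y z h1 h2 =>
      have hsub : (a ++ [y, x, z]).Sublist (a ++ y :: x :: z :: b) :=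
        (List.sublist_append_left [y, x, z] b).append_left a
      have hnd1 : (a ++ [y, x, z]).Nodup := hsub.nodup hnd
      have hnd2 : (y :: x :: z :: a).Nodup := by
        have := (List.perm_append_comm (l₁ := a) (l₂ := [y, x, z])).nodup hnd1
        simpa using this
      have hand : a.Nodup := by
        simp only [List.nodup_cons] at hnd2; tauto
      have hperm : (y :: x :: z :: a).Perm (x :: y :: z :: (RSK a).flatten) := by
        refine (List.Perm.swap x y (z :: a)).trans ?_
        exact ((((RSK_flatten_perm a).symm).cons z).cons y).cons x
      have hnd3 : (x :: y :: z :: (RSK a).flatten).Nodup := hperm.nodup hnd2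
      have hE := E1 (RSK a) x y z (RSK_rows_sorted hand) hnd3 h1 h2
      rw [show a ++ y :: x :: z :: b = a ++ ([y, x, z] ++ b) by simp,
        show a ++ y :: z :: x :: b = a ++ ([y, z, x] ++ b) by simp,
        RSK_append, RSK_append, List.foldl_append, List.foldl_append]
      simp only [List.foldl_cons, List.foldl_nil]
      rw [hE]
  | @move2 a b x y z h1 h2 =>
      have hsub : (a ++ [x, z, y]).Sublist (a ++ x :: z :: y :: b) :=
        (List.sublist_append_left [x, z, y] b).append_left a
      have hnd1 : (a ++ [x, z, y]).Nodup := hsub.nodup hnd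
      have hnd2 : (x :: z :: y :: a).Nodup := by
        have := (List.perm_append_comm (l₁ := a) (l₂ := [x, z, y])).nodup hnd1
        simpa using this
      have hand : a.Nodup := by
        simp only [List.nodup_cons] at hnd2; tauto
      have hperm : (x :: z :: y :: a).Perm (x :: y :: z :: (RSK a).flatten) := by
        refine List.Perm.cons x ((List.Perm.swap y z a).trans ?_)
        exact (((RSK_flatten_perm a).symm).cons z).cons y
      have hnd3 : (x :: y :: z :: (RSK a).flatten).Nodup := hperm.nodup hnd2
      have hE := E2 (RSK a) x y z (RSK_rows_sorted hand) hnd3 h1 h2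
      rw [show a ++ x :: z :: y :: b = a ++ ([x, z, y] ++ b) by simp,
        show a ++ z :: x :: y :: b = a ++ ([z, x, y] ++ b) by simp,
        RSK_append, RSK_append, List.foldl_append, List.foldl_append]
      simp only [List.foldl_cons, List.foldl_nil]
      rw [hE]

theorem Knuth_RSK {u v : List ℕ} (h : Knuth u v) (hnd : u.Nodup) : RSK u = RSK v := by
  induction h with
  | rel _ _ h => exact KStep_RSK h hnd
  | refl _ => rfl
  | symm a b hab ih =>
      have : a.Nodup := (Knuth.perm hab).symm.nodup hnd
      exact (ih this).symm
  | trans a b c hab _ ih1 ih2 =>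
      exact (ih1 hnd).trans (ih2 ((Knuth.perm hab).nodup hnd))
/-! ### a word is Knuth equivalent to the reading word of its RSK tableau -/

theorem knuth_slide_right {b x : ℕ} {B : List ℕ} (hs : (b :: B).Pairwise (· < ·))
    (hxb : x < b) : Knuth ((b :: B) ++ [x]) (b :: x :: B) := by
  induction B generalizing b with
  | nil => exact Knuth.refl _
  | cons c B' ih =>
      have hbc : b < c := (List.pairwise_cons.1 hs).1 c (by simp)
      have hsc : (c :: B').Pairwise (· < ·) := (List.pairwise_cons.1 hs).2
      have h1 : Knuth (b :: ((c :: B') ++ [x])) (b :: c :: x :: B') := by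
        simpa using (ih hsc (by omega)).append_left [b]
      refine Knuth.trans (by simpa using h1) ?_
      refine Knuth.symm (Knuth.of_step ?_)
      simpa using KStep.move1 (x := x) (y := b) (z := c) [] B' hxb hbc

theorem knuth_bubble_left {A : List ℕ} {b x : ℕ} {B : List ℕ}
    (hsA : A.Pairwise (· < ·)) (hA : ∀ a ∈ A, a < x) (hxb : x < b) :
    Knuth (A ++ b :: x :: B) (b :: (A ++ x :: B)) := by
  induction A with
  | nil => exact Knuth.refl _
  | cons a A' ih =>
      have hax : a < x := hA a (by simp)
      have h1 : Knuth (a :: (A' ++ b :: x :: B)) (a :: b :: (A' ++ x :: B)) := by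
        simpa using (ih ((List.pairwise_cons.1 hsA).2)
          (fun a ha => hA a (by simp [ha]))).append_left [a]
      refine Knuth.trans (by simpa using h1) ?_
      cases A' with
      | nil =>
          refine Knuth.of_step ?_
          simpa using KStep.move2 (x := a) (y := x) (z := b) [] B hax hxb
      | cons a1 A'' =>
          have haa1 : a < a1 := (List.pairwise_cons.1 hsA).1 a1 (by simp)
          have ha1x : a1 < x := hA a1 (by simp)
          refine Knuth.of_step ?_
          simpa using KStep.move2 (x := a) (y := a1) (z := b) [] (A'' ++ x :: B)
            haa1 (by omega)

theorem row_knuth {A : List ℕ} {b x : ℕ} {B : List ℕ}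
    (hs : (A ++ b :: B).Pairwise (· < ·)) (hA : ∀ a ∈ A, a < x) (hxb : x < b) :
    Knuth ((A ++ b :: B) ++ [x]) (b :: (A ++ x :: B)) := by
  rcases sorted_append_iff.1 hs with ⟨hsA, hsB, _⟩
  have h1 : Knuth (A ++ ((b :: B) ++ [x])) (A ++ (b :: x :: B)) :=
    (knuth_slide_right hsB hxb).append_left A
  refine Knuth.trans (by simpa using h1) ?_
  exact knuth_bubble_left hsA hA hxb

theorem readWord_cons (R : List ℕ) (ts : List (List ℕ)) :
    readWord (R :: ts) = readWord ts ++ R := by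
  simp [readWord]

theorem readWord_insert {t : List (List ℕ)} {a : ℕ}
    (hs : ∀ r ∈ t, r.Pairwise (· < ·)) (hnd : (a :: t.flatten).Nodup) :
    Knuth (readWord t ++ [a]) (readWord (insertTab t a)) := by
  induction t generalizing a with
  | nil => exact Knuth.refl _
  | cons R ts ih =>
      have hsR : R.Pairwise (· < ·) := hs R (by simp)
      simp only [List.flatten_cons, List.nodup_cons, List.mem_append, not_or] at hnd
      obtain ⟨⟨haR, haf⟩, hnd⟩ := hnd
      rcases List.nodup_append.1 hnd with ⟨hRnd, hflnd, hdisj⟩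
      obtain ⟨A, B, hR, hA, hB⟩ := sorted_split hsR haR
      cases B with
      | nil =>
          rw [List.append_nil] at hR
          have h0 : insertTab (R :: ts) a = (R ++ [a]) :: ts :=
            insertTab_cons_none (insertRow_all_lt (by rw [hR]; exact hA))
          rw [h0, readWord_cons, readWord_cons]
          rw [List.append_assoc]
          exact Knuth.refl _
      | cons b B' =>
          have hab : a < b := hB b (by simp)
          have hbR : b ∈ R := by rw [hR]; simp
          have h0 : insertTab (R :: ts) a = (A ++ a :: B') :: insertTab ts b :=
            insertTab_cons_some (by rw [hR]; exact insertRow_split hA hab)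
          rw [h0, readWord_cons, readWord_cons]
          have h1 : Knuth (readWord ts ++ R ++ [a])
              (readWord ts ++ (b :: (A ++ a :: B'))) := by
            rw [List.append_assoc]
            refine Knuth.append_left _ ?_
            rw [hR]
            exact row_knuth (hR ▸ hsR) hA hab
          refine h1.trans ?_
          have h2 : Knuth (readWord ts ++ [b]) (readWord (insertTab ts b)) := by
            refine ih (fun r hr => hs r (by simp [hr])) ?_
            simp only [List.nodup_cons]
            exact ⟨(fun hb => hdisj b hbR b hb rfl), hflnd⟩
          have h3 := h2.append_right (A ++ a :: B')
          refine Knuth.trans ?_ h3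
          simp
          exact Knuth.refl _

theorem RSK_readWord {w : List ℕ} (hnd : w.Nodup) : Knuth w (readWord (RSK w)) := by
  induction w using List.reverseRecOn with
  | nil => exact Knuth.refl _
  | append_singleton u a ih =>
      have hund : u.Nodup := (List.sublist_append_left u [a]).nodup hnd
      have h1 : Knuth (u ++ [a]) (readWord (RSK u) ++ [a]) :=
        (ih hund).append_right [a]
      refine h1.trans ?_
      have h2 : (a :: (RSK u).flatten).Nodup := by
        have : (a :: u).Nodup := (List.perm_append_comm (l₁ := u)).nodup hnd
        exact (((RSK_flatten_perm u).symm).cons a).nodup this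
      have h3 := readWord_insert (RSK_rows_sorted hund) h2
      rw [RSK_append]
      simpa using h3
/-! ### validity of RSK tableaux -/

def rowRel (r₁ r₂ : List ℕ) : Prop :=
  r₂.length ≤ r₁.length ∧ ∀ c < r₂.length, r₁.getD c 0 < r₂.getD c 0

def ValidTab (t : List (List ℕ)) : Prop :=
  (∀ r ∈ t, r.Pairwise (· < ·)) ∧ t.Chain' rowRel ∧ ∀ r ∈ t, r ≠ []

theorem rowRel_trans : Transitive rowRel := by
  intro r1 r2 r3 h12 h23
  refine ⟨le_trans h23.1 h12.1, fun c hc => ?_⟩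
  exact lt_trans (h12.2 c (lt_of_lt_of_le hc h23.1)) (h23.2 c hc)

instance : IsTrans (List ℕ) rowRel := ⟨fun _ _ _ h1 h2 => rowRel_trans h1 h2⟩

theorem getD_at (A : List ℕ) (x : ℕ) (B : List ℕ) :
    (A ++ x :: B).getD A.length 0 = x := by
  rw [List.getD_append_right _ _ _ _ (le_refl _)]
  simp

theorem getD_mem {A : List ℕ} {c : ℕ} (h : c < A.length) : A.getD c 0 ∈ A := by
  rw [List.getD_eq_getElem A 0 h]
  exact List.getElem_mem _

theorem getD_replace_ne {A B : List ℕ} {x b : ℕ} {c : ℕ} (h : c ≠ A.length) :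
    (A ++ x :: B).getD c 0 = (A ++ b :: B).getD c 0 := by
  rcases lt_or_gt_of_ne h with h'|h'
  · rw [List.getD_append _ _ _ _ h', List.getD_append _ _ _ _ h']
  · rw [List.getD_append_right _ _ _ _ (by omega), List.getD_append_right _ _ _ _ (by omega)]
    obtain ⟨k, hk⟩ : ∃ k, c - A.length = k + 1 := ⟨c - A.length - 1, by omega⟩
    rw [hk]
    simp

theorem getD_replace_le {A B : List ℕ} {x b : ℕ} (h : x ≤ b) (c : ℕ) :
    (A ++ x :: B).getD c 0 ≤ (A ++ b :: B).getD c 0 := by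
  rcases lt_trichotomy c A.length with h'|h'|h'
  · rw [List.getD_append _ _ _ _ h']
    rw [List.getD_append _ _ _ _ h']
  · subst h'; rw [getD_at, getD_at]; exact h
  · rw [getD_replace_ne (by omega)]

theorem insertTab_ne_nil {t : List (List ℕ)} {x : ℕ} : insertTab t x ≠ [] := by
  cases t with
  | nil => simp [insertTab]
  | cons R ts =>
      cases hIR : insertRow R x with
      | mk R' o =>
        cases o with
        | none => rw [insertTab_cons_none hIR]; simp
        | some b => rw [insertTab_cons_some hIR]; simp

theorem insertTab_valid {t : List (List ℕ)} {x : ℕ} (hv : ValidTab t)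
    (hnd : t.flatten.Nodup) (hx : x ∉ t.flatten) : ValidTab (insertTab t x) := by
  induction t generalizing x with
  | nil =>
      exact ⟨by intro r hr; simp [insertTab] at hr; simp [hr],
        List.isChain_singleton _, by intro r hr; simp [insertTab] at hr; simp [hr]⟩
  | cons R ts ih =>
      obtain ⟨hs, hch, hne⟩ := hv
      have hsR : R.Pairwise (· < ·) := hs R (by simp)
      simp only [List.flatten_cons, List.mem_append] at hx
      have hxR : x ∉ R := fun h => hx (Or.inl h)
      rcases List.nodup_append.1 (by simpa using hnd) with ⟨hRnd, hflnd, hdisj⟩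
      obtain ⟨A, B, hR, hA, hB⟩ := sorted_split hsR hxR
      have hsorted' : (insertRow R x).1.Pairwise (· < ·) := insertRow_fst_sorted hsR hxR
      cases B with
      | nil =>
          rw [List.append_nil] at hR
          have h0 : insertTab (R :: ts) x = (R ++ [x]) :: ts :=
            insertTab_cons_none (insertRow_all_lt (by rw [hR]; exact hA))
          rw [h0]
          refine ⟨?_, ?_, ?_⟩
          · intro r hr
            rcases List.mem_cons.1 hr with h|h
            · subst h
              rw [sorted_append_iff]
              exact ⟨hsR, by simp, by simpa [hR] using hA⟩
            · exact hs r (by simp [h])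
          · refine List.isChain_cons.2 ?_
            refine ⟨?_, (List.isChain_cons.1 hch).2⟩
            intro S hS
            have hrel : rowRel R S := by
              cases ts with
              | nil => simp at hS
              | cons S0 ts' =>
                  simp at hS
                  subst hS
                  exact (List.isChain_cons_cons.1 hch).1
            refine ⟨le_trans hrel.1 (by simp), fun c hc => ?_⟩
            rw [List.getD_append _ _ _ _ (lt_of_lt_of_le hc hrel.1)]
            exact hrel.2 c hc
          · intro r hr
            rcases List.mem_cons.1 hr with h|h
            · subst h; simp
            · exact hne r (by simp [h])
      | cons b B' =>
          have hxb : x < b := hB b (by simp)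
          have hbR : b ∈ R := by rw [hR]; simp
          have h0 : insertTab (R :: ts) x = (A ++ x :: B') :: insertTab ts b :=
            insertTab_cons_some (by rw [hR]; exact insertRow_split hA hxb)
          rw [h0]
          have hIH : ValidTab (insertTab ts b) := by
            refine ih ⟨fun r hr => hs r (by simp [hr]),
              (List.isChain_cons.1 hch).2, fun r hr => hne r (by simp [hr])⟩
              hflnd ((fun hb => hdisj b hbR b hb rfl))
          have hlen : (A ++ x :: B').length = R.length := by rw [hR]; simp
          have hle : ∀ c, (A ++ x :: B').getD c 0 ≤ R.getD c 0 := by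
            intro c; rw [hR]; exact getD_replace_le (le_of_lt hxb) c
          have hheadlt : (A ++ x :: B').getD A.length 0 = x := getD_at A x B'
          -- strict inequality against b at any position ≤ A.length
          have hstrict : ∀ c ≤ A.length, (A ++ x :: B').getD c 0 < b := by
            intro c hc
            rcases lt_or_eq_of_le hc with h'|h'
            · rw [List.getD_append _ _ _ _ h']
              have := hA _ (getD_mem h')
              omega
            · rw [h', hheadlt]; exact hxb
          refine ⟨?_, ?_, ?_⟩
          · intro r hr
            rcases List.mem_cons.1 hr with h|h
            · subst h
              have := hsorted'
              rw [hR, insertRow_split hA hxb] at this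
              exact this
            · exact hIH.1 r h
          · refine List.isChain_cons.2 ?_
            refine ⟨?_, hIH.2.1⟩
            intro S' hS'
            cases ts with
            | nil =>
                have : insertTab ([] : List (List ℕ)) b = [[b]] := rfl
                rw [this] at hS'
                simp at hS'
                subst hS'
                refine ⟨by rw [hlen, hR]; simp; omega, fun c hc => ?_⟩
                have hc0 : c = 0 := by simpa using hc
                subst hc0
                simp only [List.getD_cons_zero]
                exact hstrict 0 (by omega)
            | cons S ts' =>
                have hrel : rowRel R S := (List.isChain_cons_cons.1 hch).1
                have hsS : S.Pairwise (· < ·) := hs S (by simp)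
                have hbS : b ∉ S := fun h => (fun hb => hdisj b hbR b hb rfl) (by simp [h])
                obtain ⟨C, D, hS, hC, hD⟩ := sorted_split hsS hbS
                have hlenS : S.length ≤ R.length := hrel.1
                have hCA : C.length ≤ A.length := by
                  by_contra hcon
                  push_neg at hcon
                  have h1 : A.length < S.length := by
                    rw [hS]; simp
                    calc A.length < C.length := hcon
                      _ ≤ C.length + D.length := by omega
                  have h2 := hrel.2 A.length h1
                  rw [hR, getD_at] at h2
                  have h3 : S.getD A.length 0 ∈ C := by
                    rw [hS, List.getD_append _ _ _ _ hcon]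
                    exact getD_mem hcon
                  have := hC _ h3
                  omega
                cases D with
                | nil =>
                    rw [List.append_nil] at hS
                    have hSb : ∀ a ∈ S, a < b := by rw [hS]; exact hC
                    have h1 : insertTab (S :: ts') b = (S ++ [b]) :: ts' :=
                      insertTab_cons_none (insertRow_all_lt hSb)
                    rw [h1] at hS'
                    simp at hS'
                    subst hS'
                    have hlenSR : S.length < R.length := by
                      rcases lt_or_eq_of_le hlenS with h'|h'
                      · exact h'
                      · exfalso
                        have h1' : A.length < S.length := by rw [h', hR]; simp
                        have h2 := hrel.2 A.length h1'
                        rw [hR, getD_at] at h2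
                        have := hSb _ (getD_mem h1')
                        omega
                    refine ⟨by rw [hlen]; simp; omega, fun c hc => ?_⟩
                    rcases lt_or_eq_of_le (Nat.le_of_lt_succ (by simpa using hc)) with h'|h'
                    · rw [List.getD_append _ _ _ _ h']
                      exact lt_of_le_of_lt (hle c) (hrel.2 c h')
                    · subst h'
                      rw [getD_at]
                      have hSA : S.length ≤ A.length := by
                        rw [hS]; exact hCA
                      exact hstrict S.length hSA
                | cons d D' =>
                    have hbd : b < d := hD d (by simp)
                    have h1 : insertTab (S :: ts') b = (C ++ b :: D') :: insertTab ts' d :=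
                      insertTab_cons_some (by rw [hS]; exact insertRow_split hC hbd)
                    rw [h1] at hS'
                    simp at hS'
                    subst hS'
                    have hlenS' : (C ++ b :: D').length = S.length := by rw [hS]; simp
                    refine ⟨by rw [hlen, hlenS']; exact hlenS, fun c hc => ?_⟩
                    rw [hlenS'] at hc
                    by_cases hcC : c = C.length
                    · subst hcC
                      rw [getD_at]
                      exact hstrict C.length hCA
                    · rw [← getD_replace_ne (x := d) (b := b) hcC, ← hS]
                      exact lt_of_le_of_lt (hle c) (hrel.2 c hc)
          · intro r hr
            rcases List.mem_cons.1 hr with h|h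
            · subst h; simp
            · exact hIH.2.2 r h

theorem RSK_valid {w : List ℕ} (hnd : w.Nodup) : ValidTab (RSK w) := by
  induction w using List.reverseRecOn with
  | nil => exact ⟨by simp [RSK], List.isChain_nil, by simp [RSK]⟩
  | append_singleton u a ih =>
      have hund : u.Nodup := (List.sublist_append_left u [a]).nodup hnd
      have h1 : (a :: u).Nodup := (List.perm_append_comm (l₁ := u)).nodup hnd
      have h2 : (a :: (RSK u).flatten).Nodup :=
        (((RSK_flatten_perm u).symm).cons a).nodup h1
      rw [RSK_append]
      simp only [List.foldl_cons, List.foldl_nil]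
      refine insertTab_valid (ih hund) ?_ ?_
      · exact (List.nodup_cons.1 h2).2
      · exact (List.nodup_cons.1 h2).1
/-! ### transpose computation: RSK of the reversed reading word -/

def colT (t : List (List ℕ)) (c : ℕ) : List ℕ := t.filterMap (fun r => r[c]?)

theorem colT_append (T : List (List ℕ)) (s : List ℕ) (c : ℕ) :
    colT (T ++ [s]) c = colT T c ++ (s[c]?).toList := by
  cases h : s[c]? <;> simp [colT, List.filterMap_append, h]

theorem colT_map_tail (T : List (List ℕ)) (c : ℕ) :
    colT (T.map List.tail) c = colT T (c + 1) := by
  simp only [colT, List.filterMap_map]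
  congr 1
  funext r
  simp [List.getElem?_tail]

theorem headD_map_tail {T : List (List ℕ)} (hT : T ≠ []) :
    (T.map List.tail).headD [] = (T.headD []).tail := by
  cases T with
  | nil => simp at hT
  | cons a l => simp

theorem transposeTab_width (t : List (List ℕ)) :
    transposeTab t = (List.range (t.headD []).length).map (colT t) := rfl

theorem transpose_snoc {T : List (List ℕ)} (s : List ℕ) (hT : T ≠ [])
    (hW : 1 ≤ (T.headD []).length) :
    transposeTab (T ++ [s])
      = (colT T 0 ++ (s[0]?).toList) :: transposeTab (T.map List.tail ++ [s.tail]) := by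
  have hhead : ((T ++ [s]).headD []) = T.headD [] := by
    cases T with
    | nil => simp at hT
    | cons a l => simp
  have hhead2 : ((T.map List.tail ++ [s.tail]).headD []) = (T.headD []).tail := by
    cases T with
    | nil => simp at hT
    | cons a l => simp
  rw [transposeTab_width, transposeTab_width, hhead, hhead2]
  obtain ⟨W, hWe⟩ : ∃ W, (T.headD []).length = W + 1 := ⟨(T.headD []).length - 1, by omega⟩
  rw [hWe, List.range_succ_eq_map]
  have htl : (T.headD []).tail.length = W := by
    rw [List.length_tail, hWe]; omega
  rw [htl]
  simp only [List.map_cons, List.map_map]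
  congr 1
  · rw [colT_append]
  · refine List.map_congr_left fun i _ => ?_
    show colT (T ++ [s]) (Nat.succ i) = colT (T.map List.tail ++ [s.tail]) i
    rw [colT_append, colT_append, colT_map_tail, List.getElem?_tail]
theorem sorted_getD_lt {l : List ℕ} (hs : l.Pairwise (· < ·)) {i j : ℕ} (hij : i < j)
    (hj : j < l.length) : l.getD i 0 < l.getD j 0 := by
  rw [List.getD_eq_getElem _ _ (lt_trans hij hj), List.getD_eq_getElem _ _ hj]
  exact List.pairwise_iff_getElem.1 hs i j _ _ hij

theorem step1 : ∀ (s' : List ℕ) (T : List (List ℕ)) (c : ℕ), T ≠ [] →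
    (c :: s').Pairwise (· < ·) →
    (c :: s').length ≤ (T.headD []).length →
    (∀ i < (c :: s').length, ∀ a ∈ colT T i, a < (c :: s').getD i 0) →
    insertTab (transposeTab (T ++ [s'])) c = transposeTab (T ++ [c :: s']) := by
  intro s'
  induction s' with
  | nil =>
      intro T c hT hs hW hdom
      have hW1 : 1 ≤ (T.headD []).length := by simpa using hW
      rw [transpose_snoc [] hT hW1, transpose_snoc [c] hT hW1]
      simp only [List.getElem?_nil, List.getElem?_cons_zero, Option.toList_some,
        Option.toList_none, List.tail_nil, List.tail_cons, List.append_nil]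
      have hall : ∀ a ∈ colT T 0, a < c := by
        intro a ha; simpa using hdom 0 (by simp) a ha
      rw [insertTab_cons_none (insertRow_all_lt hall)]
  | cons w s'' ih =>
      intro T c hT hs hW hdom
      have hW1 : 1 ≤ (T.headD []).length := by
        have := hW; simp only [List.length_cons] at this; omega
      have hcw : c < w := (List.pairwise_cons.1 hs).1 w (by simp)
      rw [transpose_snoc (w :: s'') hT hW1, transpose_snoc (c :: w :: s'') hT hW1]
      simp only [List.getElem?_cons_zero, Option.toList_some, List.tail_cons]
      have hall : ∀ a ∈ colT T 0, a < c := by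
        intro a ha; simpa using hdom 0 (by simp) a ha
      have h1 : insertRow (colT T 0 ++ [w]) c = (colT T 0 ++ c :: [], some w) := by
        simpa using insertRow_split (A := colT T 0) (B := []) hall hcw
      rw [insertTab_cons_some h1]
      have hT' : T.map List.tail ≠ [] := by cases T <;> simp_all
      have ihres := ih (T.map List.tail) w hT' ((List.pairwise_cons.1 hs).2)
        (by
          rw [headD_map_tail hT, List.length_tail]
          simp only [List.length_cons] at hW ⊢
          omega)
        (by
          intro i hi a ha
          rw [colT_map_tail] at ha
          have := hdom (i + 1) (by simp at hi ⊢; omega) a ha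
          simpa using this)
      rw [ihres]

theorem transpose_snoc_nil (T : List (List ℕ)) : transposeTab (T ++ [[]]) = transposeTab T := by
  cases T with
  | nil => rfl
  | cons a l =>
      rw [transposeTab_width, transposeTab_width]
      simp only [List.cons_append, List.headD_cons]
      refine List.map_congr_left fun i _ => ?_
      show colT ((a :: l) ++ [[]]) i = colT (a :: l) i
      rw [colT_append]
      simp

theorem colT_single (s : List ℕ) (c : ℕ) : colT [s] c = (s[c]?).toList := by
  cases h : s[c]? <;> simp [colT, h]

theorem transpose_single_cons (w : ℕ) (s : List ℕ) :
    transposeTab [w :: s] = [w] :: transposeTab [s] := by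
  rw [transposeTab_width, transposeTab_width]
  simp only [List.headD_cons, List.length_cons]
  rw [List.range_succ_eq_map]
  simp only [List.map_cons, List.map_map]
  congr 1

theorem step0 (s' : List ℕ) : ∀ c, (c :: s').Pairwise (· < ·) →
    insertTab (transposeTab [s']) c = transposeTab [c :: s'] := by
  induction s' with
  | nil =>
      intro c _
      show insertTab (transposeTab [[]]) c = transposeTab [[c]]
      rw [show transposeTab [[]] = [] from rfl]
      rw [transpose_single_cons c []]
      rfl
  | cons w s'' ih =>
      intro c hs
      have hcw : c < w := (List.pairwise_cons.1 hs).1 w (by simp)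
      rw [transpose_single_cons w s'']
      have h1 : insertRow [w] c = ([c], some w) :=
        insertRow_split (A := []) (B := []) (by simp) hcw
      rw [insertTab_cons_some h1, ih w ((List.pairwise_cons.1 hs).2),
        transpose_single_cons c (w :: s'')]

theorem claim0 (s : List ℕ) (hs : s.Pairwise (· < ·)) :
    List.foldl insertTab [] s.reverse = transposeTab [s] := by
  induction s with
  | nil => rfl
  | cons c s' ih =>
      rw [List.reverse_cons, List.foldl_append]
      simp only [List.foldl_cons, List.foldl_nil]
      rw [ih ((List.pairwise_cons.1 hs).2)]
      exact step0 s' c hs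

theorem claim1 (T : List (List ℕ)) (hT : T ≠ []) : ∀ s : List ℕ, s.Pairwise (· < ·) →
    s.length ≤ (T.headD []).length →
    (∀ i < s.length, ∀ a ∈ colT T i, a < s.getD i 0) →
    List.foldl insertTab (transposeTab T) s.reverse = transposeTab (T ++ [s]) := by
  intro s
  induction s with
  | nil =>
      intro _ _ _
      rw [transpose_snoc_nil]
      rfl
  | cons c s' ih =>
      intro hs hW hdom
      rw [List.reverse_cons, List.foldl_append]
      simp only [List.foldl_cons, List.foldl_nil]
      rw [ih ((List.pairwise_cons.1 hs).2)
        (le_trans (by simp) hW)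
        (by
          intro i hi a ha
          have h1 := hdom i (by simp; omega) a ha
          have h2 : (c :: s').getD i 0 < (c :: s').getD (i + 1) 0 :=
            sorted_getD_lt hs (by omega) (by simp; omega)
          have h3 : (c :: s').getD (i + 1) 0 = s'.getD i 0 := rfl
          omega)]
      exact step1 s' T c hT hs hW hdom

theorem readWord_reverse_eq (t : List (List ℕ)) :
    (readWord t).reverse = (t.map List.reverse).flatten := by
  simp [readWord, List.reverse_flatten, List.map_reverse]

theorem RSK_rev_readWord (t : List (List ℕ)) (hv : ValidTab t) :
    RSK ((readWord t).reverse) = transposeTab t := by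
  induction t using List.reverseRecOn with
  | nil => rfl
  | append_singleton T r ih =>
      obtain ⟨hsrows, hch, hnon⟩ := hv
      have hvT : ValidTab T :=
        ⟨fun q hq => hsrows q (by simp [hq]), (List.isChain_append.1 hch).1,
          fun q hq => hnon q (by simp [hq])⟩
      have hsr : r.Pairwise (· < ·) := hsrows r (by simp)
      have hword : ((readWord (T ++ [r])).reverse) = (readWord T).reverse ++ r.reverse := by
        rw [readWord_reverse_eq, readWord_reverse_eq, List.map_append, List.flatten_append]
        simp
      rw [hword, RSK_append]
      cases T with
      | nil =>
          have : RSK ((readWord ([] : List (List ℕ))).reverse) = [] := rfl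
          rw [this]
          exact claim0 r hsr
      | cons T0 T1 =>
          rw [ih hvT]
          have hT : (T0 :: T1 : List (List ℕ)) ≠ [] := by simp
          have hpw : List.Pairwise rowRel ((T0 :: T1) ++ [r]) :=
            List.isChain_iff_pairwise.1 hch
          have hrel : ∀ row ∈ T0 :: T1, rowRel row r := by
            intro row hrow
            exact (List.pairwise_append.1 hpw).2.2 row hrow r (by simp)
          refine claim1 (T0 :: T1) hT r hsr ?_ ?_
          · exact (hrel T0 (by simp)).1
          · intro i hi a ha
            obtain ⟨row, hrow, hrowa⟩ := List.mem_filterMap.1 ha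
            have h1 := (hrel row hrow).2 i hi
            have h2 : row.getD i 0 = a := by
              rw [List.getD_eq_getElem?_getD, hrowa]
              rfl
            omega

theorem RSK_reverse {w : List ℕ} (hnd : w.Nodup) :
    RSK w.reverse = transposeTab (RSK w) := by
  have h1 : Knuth w (readWord (RSK w)) := RSK_readWord hnd
  have h2 : Knuth w.reverse (readWord (RSK w)).reverse := h1.rev
  have h3 : RSK w.reverse = RSK ((readWord (RSK w)).reverse) :=
    Knuth_RSK h2 (List.nodup_reverse.2 hnd)
  rw [h3]
  exact RSK_rev_readWord (RSK w) (RSK_valid hnd)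
/-! ### assembly: inversion sets, reversal, and the main theorem -/

theorem nodup_indexOf_eq {l : List ℕ} (hnd : l.Nodup) {a : ℕ} {k : ℕ}
    (hk : k < l.length) (h : l[k] = a) : l.idxOf a = k := by
  have hmem : a ∈ l := h ▸ List.getElem_mem _
  have h1 : l.idxOf a < l.length := List.idxOf_lt_length_iff.2 hmem
  have h2 : l[l.idxOf a] = a := List.getElem_idxOf h1
  exact (List.Nodup.getElem_inj_iff hnd).1 (by rw [h2, h])

theorem indexOf_reverse {l : List ℕ} (hnd : l.Nodup) {a : ℕ} (ha : a ∈ l) :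
    l.reverse.idxOf a = l.length - 1 - l.idxOf a := by
  have hi : l.idxOf a < l.length := List.idxOf_lt_length_iff.2 ha
  refine nodup_indexOf_eq (List.nodup_reverse.2 hnd) (k := l.length - 1 - l.idxOf a)
    (by simp; omega) ?_
  rw [List.getElem_reverse]
  have h5 : l.length - 1 - (l.length - 1 - l.idxOf a) = l.idxOf a := by omega
  simp only [h5]
  exact List.getElem_idxOf hi

theorem indexOf_ne {l : List ℕ} {a b : ℕ} (ha : a ∈ l) (hab : a ≠ b) :
    l.idxOf a ≠ l.idxOf b := by
  intro h
  have hi : l.idxOf a < l.length := List.idxOf_lt_length_iff.2 ha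
  have h2 : l[l.idxOf a] = a := List.getElem_idxOf hi
  have h3 : l[l.idxOf b]'(h ▸ hi) = b := List.getElem_idxOf (h ▸ hi)
  apply hab
  rw [← h2, ← h3]
  congr 1

theorem wordLE_reverse {σ τ : List ℕ} (hσ : σ.Nodup) (hτ : τ.Nodup)
    (hmem : ∀ a, a ∈ σ ↔ a ∈ τ) (h : wordLE σ τ) : wordLE τ.reverse σ.reverse := by
  rintro ⟨a, b⟩ ⟨hab, haτ, hbτ, hidx⟩
  simp only [List.mem_reverse] at haτ hbτ
  have haσ : a ∈ σ := (hmem a).2 haτ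
  have hbσ : b ∈ σ := (hmem b).2 hbτ
  have habne : a ≠ b := by omega
  refine ⟨hab, by simpa using haσ, by simpa using hbσ, ?_⟩
  rw [indexOf_reverse hσ haσ, indexOf_reverse hσ hbσ]
  rw [indexOf_reverse hτ haτ, indexOf_reverse hτ hbτ] at hidx
  have hia : σ.idxOf a < σ.length := List.idxOf_lt_length_iff.2 haσ
  have hib : σ.idxOf b < σ.length := List.idxOf_lt_length_iff.2 hbσ
  have hja : τ.idxOf a < τ.length := List.idxOf_lt_length_iff.2 haτ
  have hjb : τ.idxOf b < τ.length := List.idxOf_lt_length_iff.2 hbτ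
  have hneσ := indexOf_ne haσ habne
  have hneτ := indexOf_ne haτ habne
  -- from hidx : τ.length - 1 - idx b < τ.length - 1 - idx a, conclude idx a < idx b in τ
  have hτab : τ.idxOf a < τ.idxOf b := by
    rcases lt_trichotomy (τ.idxOf a) (τ.idxOf b) with h'|h'|h'
    · exact h'
    · exact absurd h' hneτ
    · omega
  by_contra hcon
  push_neg at hcon
  have hσba : σ.idxOf b < σ.idxOf a := by omega
  have hinv : ((a, b) : ℕ × ℕ) ∈ InvL σ := ⟨hab, haσ, hbσ, hσba⟩
  have := h hinv
  obtain ⟨_, _, _, h4⟩ := this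
  have h4' : τ.idxOf b < τ.idxOf a := h4
  omega

theorem IsPermWord.nodup {n : ℕ} {w : List ℕ} (h : IsPermWord n w) : w.Nodup :=
  h.symm.nodup List.nodup_range'

theorem tabRel_transpose {n : ℕ} {A B : List (List ℕ)} (h : tabRel n A B) :
    tabRel n (transposeTab B) (transposeTab A) := by
  obtain ⟨σ, τ, hσ, hτ, hA, hB, hle⟩ := h
  have hσnd : σ.Nodup := hσ.nodup
  have hτnd : τ.Nodup := hτ.nodup
  refine ⟨τ.reverse, σ.reverse, (List.reverse_perm τ).trans hτ,
    (List.reverse_perm σ).trans hσ, ?_, ?_, ?_⟩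
  · rw [RSK_reverse hτnd, hB]
  · rw [RSK_reverse hσnd, hA]
  · refine wordLE_reverse hσnd hτnd (fun a => ?_) hle
    constructor
    · intro h'; exact hτ.mem_iff.2 (hσ.mem_iff.1 h')
    · intro h'; exact hσ.mem_iff.2 (hτ.mem_iff.1 h')
/-- If `S ≤_weak T` in `SYT_n` then `T^t ≤_weak S^t`:
transposition is order reversing for the weak order. -/
theorem transpose_order_reversing (n : ℕ) (S T : List (List ℕ))
    (hS : IsSYT n S) (hT : IsSYT n T) (h : tabLE n S T) :
    tabLE n (transposeTab T) (transposeTab S) := by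
  clear hS hT
  induction h with
  | single h1 => exact Relation.TransGen.single (tabRel_transpose h1)
  | tail _ h2 ih => exact Relation.TransGen.head (tabRel_transpose h2) ih
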